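/- Let n ≥ 0, r ≥ 2 and 1 ≤ t ≤ r−1 be integers. Then the total number of consecutive differences that are at least t in all r-flat partitions of n, plus the number of partitions of n with exactly one consecutive difference at least r and all others at most r−1, equals the number of triples (μ, a, i) with a ≥ 0 an integer, i ≥ 1 an integer, and μ an r-flat partition of n − i(ar + t): Σ_{λ∈F_r(n)} d_t(λ) + |F_{1,r}(n)| = #{(μ, a, i) : a ≥ 0, i ≥ 1, μ ∈ F_r(n − i(ar+t))}. -/

import Mathlib

open scoped Classical

namespace BeckPaper

/-- The parts of a partition, sorted in non-increasing order. -/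
def partsList {n : ℕ} (p : n.Partition) : List ℕ := p.parts.sort (· ≥ ·)

/-- The `i`-th part of a partition (`1`-indexed); `0` if `i` exceeds the number of parts. -/
def part {n : ℕ} (p : n.Partition) (i : ℕ) : ℕ := (partsList p).getD (i - 1) 0

/-- `ℓ(λ)`: the number of parts of `λ`. -/
def numParts {n : ℕ} (p : n.Partition) : ℕ := Multiset.card p.parts

/-- `ℓ_t(λ)`: the number of parts of `λ` congruent to `t` modulo `r`. -/
def lMod (r t : ℕ) {n : ℕ} (p : n.Partition) : ℕ :=
  Multiset.card (p.parts.filter (fun x => x % r = t % r))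

/-- `ℓ̄_t(λ)`: the number of different part sizes appearing at least `t` times in `λ`. -/
def lRep (t : ℕ) {n : ℕ} (p : n.Partition) : ℕ :=
  (p.parts.toFinset.filter (fun s => t ≤ p.parts.count s)).card

/-- `ℓ̄(λ)`: the number of different part sizes of `λ`. -/
def lDist {n : ℕ} (p : n.Partition) : ℕ := p.parts.toFinset.card

/-- `d_t(λ)`: the number of indices `1 ≤ i ≤ ℓ(λ)` with `λ_i − λ_{i+1} ≥ t`. -/
def dCount (t : ℕ) {n : ℕ} (p : n.Partition) : ℕ :=
  ((Finset.Icc 1 (numParts p)).filter (fun i => t ≤ part p i - part p (i + 1))).card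

/-- `λ ∈ O_r(n)`: no part is divisible by `r`. -/
def IsRegular (r : ℕ) {n : ℕ} (p : n.Partition) : Prop := ∀ x ∈ p.parts, ¬ r ∣ x

/-- `λ ∈ D_r(n)`: no part appears more than `r − 1` times. -/
def IsRestricted (r : ℕ) {n : ℕ} (p : n.Partition) : Prop :=
  ∀ s : ℕ, p.parts.count s ≤ r - 1

/-- `λ ∈ F_r(n)`: all differences of consecutive parts (with `λ_{k+1} = 0`) are `≤ r − 1`. -/
def IsFlat (r : ℕ) {n : ℕ} (p : n.Partition) : Prop :=
  ∀ i, 1 ≤ i → i ≤ numParts p → part p i - part p (i + 1) ≤ r - 1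

/-- `λ ∈ O_{1,r}(n)`: the set of part sizes divisible by `r` has exactly one element. -/
def IsOneRegular (r : ℕ) {n : ℕ} (p : n.Partition) : Prop :=
  (p.parts.toFinset.filter (fun s => r ∣ s)).card = 1

/-- `λ ∈ D_{1,r}(n)`: exactly one part size appears at least `r` times. -/
def IsOneRestricted (r : ℕ) {n : ℕ} (p : n.Partition) : Prop :=
  (p.parts.toFinset.filter (fun s => r ≤ p.parts.count s)).card = 1

/-- `λ ∈ F_{1,r}(n)`: exactly one difference of consecutive parts is `≥ r`, and all
other such differences are `≤ r − 1`. -/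
def IsOneFlat (r : ℕ) {n : ℕ} (p : n.Partition) : Prop :=
  ∃ i, (1 ≤ i ∧ i ≤ numParts p ∧ r ≤ part p i - part p (i + 1)) ∧
    ∀ j, 1 ≤ j → j ≤ numParts p → j ≠ i → part p j - part p (j + 1) ≤ r - 1

/-- `λ ∈ T_r(n)`: exactly one part size has multiplicity at least `r`, and that
multiplicity is strictly less than `2r`. -/
def IsInT (r : ℕ) {n : ℕ} (p : n.Partition) : Prop :=
  ∃ s : ℕ, (r ≤ p.parts.count s ∧ p.parts.count s < 2 * r) ∧
    ∀ s' : ℕ, r ≤ p.parts.count s' → s' = s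



open List

lemma gD_lt {L : List ℕ} {m : ℕ} (h : m < L.length) : L.getD m 0 = L[m] := by
  simp [List.getD_eq_getElem?_getD, List.getElem?_eq_getElem h]

lemma gD_ge {L : List ℕ} {m : ℕ} (h : L.length ≤ m) : L.getD m 0 = 0 := by
  simp [List.getD_eq_getElem?_getD, List.getElem?_eq_none h]

lemma getD_anti {L : List ℕ} (h : L.Pairwise (· ≥ ·)) {m m' : ℕ} (hmm : m ≤ m') :
    L.getD m' 0 ≤ L.getD m 0 := by
  rcases le_or_gt L.length m' with h' | h'
  · rw [gD_ge h']; exact Nat.zero_le _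
  · have hm : m < L.length := lt_of_le_of_lt hmm h'
    rw [gD_lt h', gD_lt hm]
    rcases eq_or_lt_of_le hmm with rfl | hlt
    · exact le_refl _
    · exact List.pairwise_iff_getElem.mp h m m' hm h' hlt

/-- padded list -/
def pad (L : List ℕ) (i : ℕ) : List ℕ := L ++ List.replicate (i - L.length) 0

lemma pad_length (L : List ℕ) (i : ℕ) : (pad L i).length = max L.length i := by
  simp [pad]; omega

lemma pad_getD (L : List ℕ) (i m : ℕ) : (pad L i).getD m 0 = L.getD m 0 := by
  rcases lt_or_ge m L.length with h | h
  · rw [gD_lt (show m < (pad L i).length by rw [pad_length]; omega), gD_lt h]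
    simp only [pad]
    rw [List.getElem_append_left h]
  · rw [gD_ge h]
    rcases lt_or_ge m (pad L i).length with h2 | h2
    · rw [gD_lt h2]
      simp only [pad]
      rw [List.getElem_append_right h]
      exact List.getElem_replicate _
    · rw [gD_ge h2]

lemma pad_sorted {L : List ℕ} (h : L.Pairwise (· ≥ ·)) (i : ℕ) : (pad L i).Pairwise (· ≥ ·) := by
  rw [pad, List.pairwise_append]
  refine ⟨h, ?_, ?_⟩
  · simp [List.pairwise_replicate]
  · intro x _ y hy
    rw [List.eq_of_mem_replicate hy]
    exact Nat.zero_le x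

lemma pad_pos {L : List ℕ} (hL : ∀ x ∈ L, 0 < x) (i : ℕ) (hi : i ≤ L.length) :
    ∀ x ∈ pad L i, 0 < x := by
  intro x hx
  rw [pad, Nat.sub_eq_zero_of_le hi] at hx
  simp at hx
  exact hL x hx


/-- Add `c` to the first `i` entries (padding with zeros if needed). -/
def fwd (L : List ℕ) (i c : ℕ) : List ℕ :=
  ((pad L i).take i).map (· + c) ++ (pad L i).drop i

lemma pad_len_ge (L : List ℕ) (i : ℕ) : i ≤ (pad L i).length := by
  rw [pad_length]; omega

lemma fwd_take_len (L : List ℕ) (i c : ℕ) :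
    (((pad L i).take i).map (· + c)).length = i := by
  simp [List.length_take, pad_length]

lemma fwd_length (L : List ℕ) (i c : ℕ) : (fwd L i c).length = max L.length i := by
  simp [fwd, List.length_take, pad_length]

lemma fwd_getD (L : List ℕ) (i c m : ℕ) :
    (fwd L i c).getD m 0 = L.getD m 0 + if m < i then c else 0 := by
  have h1 : (((pad L i).take i).map (· + c)).length = i := fwd_take_len L i c
  rcases lt_or_ge m i with h | h
  · rw [if_pos h]
    have hm : m < (fwd L i c).length := by rw [fwd_length]; omega
    rw [gD_lt hm]
    simp only [fwd]
    rw [List.getElem_append_left (by omega)]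
    rw [List.getElem_map]
    rw [List.getElem_take]
    rw [← gD_lt (show m < (pad L i).length by rw [pad_length]; omega), pad_getD]
  · rw [if_neg (by omega), Nat.add_zero]
    rcases lt_or_ge m (fwd L i c).length with h2 | h2
    · simp only [fwd]
      rw [List.getD_append_right _ _ _ _ (by rw [h1]; omega)]
      rw [h1, ← pad_getD L i m]
      rw [List.getD_eq_getElem?_getD, List.getD_eq_getElem?_getD, List.getElem?_drop]
      have hh : i + (m - i) = m := by omega
      rw [hh]
    · rw [gD_ge h2, gD_ge (by rw [fwd_length] at h2; omega)]

lemma sum_map_add (L : List ℕ) (c : ℕ) : (L.map (· + c)).sum = L.sum + L.length * c := by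
  induction L with
  | nil => simp
  | cons a l ih => simp [ih]; ring

lemma pad_sum (L : List ℕ) (i : ℕ) : (pad L i).sum = L.sum := by
  simp [pad, List.sum_replicate]

lemma fwd_sum (L : List ℕ) (i c : ℕ) : (fwd L i c).sum = L.sum + i * c := by
  have h1 := fwd_take_len L i c
  simp only [fwd, List.sum_append]
  rw [sum_map_add, List.length_take]
  have h2 : i ⊓ (pad L i).length = i := by
    have := pad_len_ge L i; omega
  rw [h2]
  have h3 : (List.take i (pad L i)).sum + (List.drop i (pad L i)).sum = (pad L i).sum := by
    rw [← List.sum_append, List.take_append_drop]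
  rw [pad_sum] at h3
  omega

lemma fwd_sorted {L : List ℕ} (h : L.Pairwise (· ≥ ·)) (i c : ℕ) :
    (fwd L i c).Pairwise (· ≥ ·) := by
  have hp : (pad L i).Pairwise (· ≥ ·) := pad_sorted h i
  have hcross : ∀ x ∈ (pad L i).take i, ∀ y ∈ (pad L i).drop i, x ≥ y := by
    have := (List.pairwise_append (l₁ := (pad L i).take i) (l₂ := (pad L i).drop i)
      (R := (· ≥ ·))).mp (by rwa [List.take_append_drop])
    exact this.2.2
  rw [fwd, List.pairwise_append]
  refine ⟨?_, ?_, ?_⟩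
  · exact List.Pairwise.map _ (fun _ _ hxy => Nat.add_le_add_right hxy c)
      (hp.sublist (List.take_sublist i _))
  · exact hp.sublist (List.drop_sublist i _)
  · intro x hx y hy
    obtain ⟨z, hz, rfl⟩ := List.mem_map.mp hx
    have := hcross z hz y hy
    omega

lemma pad_drop (L : List ℕ) (i : ℕ) : (pad L i).drop i = L.drop i := by
  rw [pad, List.drop_append]
  rw [List.drop_replicate]
  simp

lemma fwd_pos {L : List ℕ} (hL : ∀ x ∈ L, 0 < x) {c : ℕ} (hc : 0 < c) (i : ℕ) :
    ∀ x ∈ fwd L i c, 0 < x := by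
  intro x hx
  rw [fwd] at hx
  rcases List.mem_append.mp hx with hx | hx
  · obtain ⟨z, _, rfl⟩ := List.mem_map.mp hx
    omega
  · rw [pad_drop] at hx
    exact hL x (List.mem_of_mem_drop hx)

/-- Subtract `c` from the first `i` entries and remove resulting zeros. -/
def bwd (L : List ℕ) (i c : ℕ) : List ℕ :=
  (((L.take i).map (· - c)) ++ L.drop i).filter (fun x => x ≠ 0)

lemma bwd_fwd {L : List ℕ} (hL : ∀ x ∈ L, 0 < x) (i c : ℕ) :
    bwd (fwd L i c) i c = L := by
  have h1 := fwd_take_len L i c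
  have htake : (fwd L i c).take i = ((pad L i).take i).map (· + c) := by
    simp only [fwd]
    rw [List.take_append, h1, Nat.sub_self, List.take_zero,
      List.append_nil]
    exact List.take_of_length_le (le_of_eq h1)
  have hdrop : (fwd L i c).drop i = (pad L i).drop i := by
    simp only [fwd]
    rw [List.drop_append, h1, Nat.sub_self, List.drop_zero]
    have h2 : (((pad L i).take i).map (· + c)).drop i = [] := by
      apply List.drop_eq_nil_of_le
      rw [h1]
    rw [h2, List.nil_append]
  rw [bwd, htake, hdrop, List.map_map]
  have hmm : (((pad L i).take i).map ((· - c) ∘ (· + c))) = (pad L i).take i := by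
    rw [List.map_congr_left (g := id) (fun x _ => by simp), List.map_id]
  rw [hmm, List.take_append_drop]
  have hrep : (List.replicate (i - L.length) 0).filter (fun x => x ≠ 0) = [] := by
    simp
  simp only [pad]
  rw [List.filter_append, hrep, List.append_nil]
  rw [List.filter_eq_self.mpr]
  intro x hx
  have := hL x hx
  simp; omega

lemma sorted_zero_suffix {X : List ℕ} (h : X.Pairwise (· ≥ ·)) :
    X = X.filter (fun x => x ≠ 0) ++
      List.replicate (X.length - (X.filter (fun x => x ≠ 0)).length) 0 := by
  have hperm := List.filter_append_perm (fun x => decide (x ≠ 0)) X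
  have hneg : X.filter (fun x => !decide (x ≠ 0)) =
      List.replicate ((X.filter (fun x => !decide (x ≠ 0))).length) 0 := by
    apply List.eq_replicate_of_mem
    intro b hb
    have := List.of_mem_filter hb
    simpa using this
  have hlen : (X.filter (fun x => decide (x ≠ 0))).length
      + (X.filter (fun x => !decide (x ≠ 0))).length = X.length := by
    have := hperm.length_eq
    simpa using this
  have hk : (X.filter (fun x => !decide (x ≠ 0))).length
      = X.length - (X.filter (fun x => decide (x ≠ 0))).length := by omega
  symm
  apply (fun hp hs => List.Perm.eq_of_pairwise' hs h hp)
  · calc X.filter (fun x => x ≠ 0) ++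
        List.replicate (X.length - (X.filter (fun x => x ≠ 0)).length) 0
        = X.filter (fun x => decide (x ≠ 0)) ++ X.filter (fun x => !decide (x ≠ 0)) := by
          rw [← hk, ← hneg]
      _ ~ X := hperm
  · rw [List.pairwise_append]
    refine ⟨h.sublist (List.filter_sublist (l := X)), ?_, ?_⟩
    · simp [List.pairwise_replicate]
    · intro x _ y hy
      rw [List.eq_of_mem_replicate hy]
      exact Nat.zero_le x

lemma mem_take_ge {L : List ℕ} (h : L.Pairwise (· ≥ ·)) {i : ℕ} (hi1 : 1 ≤ i) :
    ∀ x ∈ L.take i, L.getD (i - 1) 0 ≤ x := by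
  intro x hx
  obtain ⟨m, hm, rfl⟩ := List.mem_iff_getElem.mp hx
  have hm1 : m < i := by
    have := hm; rw [List.length_take] at this; omega
  have hm2 : m < L.length := by
    have := hm; rw [List.length_take] at this; omega
  rw [List.getElem_take]
  rw [← gD_lt hm2]
  exact getD_anti h (by omega)

lemma mem_drop_le {L : List ℕ} (h : L.Pairwise (· ≥ ·)) {i : ℕ} :
    ∀ y ∈ L.drop i, y ≤ L.getD i 0 := by
  intro y hy
  obtain ⟨m, hm, rfl⟩ := List.mem_iff_getElem.mp hy
  rw [List.getElem_drop]
  rw [← gD_lt (by rw [List.length_drop] at hm; omega)]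
  exact getD_anti h (by omega)

lemma mem_take_ge_c {L : List ℕ} (h : L.Pairwise (· ≥ ·)) {i c : ℕ} (hi1 : 1 ≤ i)
    (hc : L.getD i 0 + c ≤ L.getD (i - 1) 0) :
    ∀ x ∈ L.take i, c ≤ x := by
  intro x hx
  have := mem_take_ge h hi1 x hx
  omega

lemma bwd_pos (L : List ℕ) (i c : ℕ) : ∀ x ∈ bwd L i c, 0 < x := by
  intro x hx
  have := List.of_mem_filter hx
  simp at this
  omega

lemma bwd_sorted {L : List ℕ} (h : L.Pairwise (· ≥ ·)) {i c : ℕ} (hi1 : 1 ≤ i)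
    (hc : L.getD i 0 + c ≤ L.getD (i - 1) 0) :
    (bwd L i c).Pairwise (· ≥ ·) := by
  have hX : ((((L.take i).map (· - c)) ++ L.drop i)).Pairwise (· ≥ ·) := by
    rw [List.pairwise_append]
    refine ⟨?_, h.sublist (List.drop_sublist i _), ?_⟩
    · exact List.Pairwise.map _ (fun _ _ hxy => Nat.sub_le_sub_right hxy c)
        (h.sublist (List.take_sublist i _))
    · intro x hx y hy
      obtain ⟨z, hz, rfl⟩ := List.mem_map.mp hx
      have h1 := mem_take_ge h hi1 z hz
      have h2 := mem_drop_le h y hy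
      omega
  exact hX.sublist List.filter_sublist

lemma bwd_length_le {L : List ℕ} {i : ℕ} (hi2 : i ≤ L.length) (c : ℕ) :
    (bwd L i c).length ≤ L.length := by
  have h1 := List.length_filter_le (fun x => decide (x ≠ 0))
    (((L.take i).map (· - c)) ++ L.drop i)
  rw [bwd]
  refine le_trans h1 ?_
  simp [List.length_take]
  omega

lemma pad_of_le {L : List ℕ} {i : ℕ} (h : i ≤ L.length) : pad L i = L := by
  simp [pad, Nat.sub_eq_zero_of_le h]

lemma fwd_bwd {L : List ℕ} (h : L.Pairwise (· ≥ ·)) (hpos : ∀ x ∈ L, 0 < x)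
    {i c : ℕ} (hi1 : 1 ≤ i) (hi2 : i ≤ L.length)
    (hc : L.getD i 0 + c ≤ L.getD (i - 1) 0) :
    fwd (bwd L i c) i c = L := by
  set A0 := (L.take i).map (· - c) with hA0
  set B := L.drop i with hB
  set A := A0.filter (fun x => x ≠ 0) with hA
  have hA0len : A0.length = i := by
    rw [hA0, List.length_map, List.length_take]; omega
  have hA0sorted : A0.Pairwise (· ≥ ·) :=
    List.Pairwise.map _ (fun _ _ hxy => Nat.sub_le_sub_right hxy c)
      (h.sublist (List.take_sublist i _))
  have hBfilter : B.filter (fun x => x ≠ 0) = B := by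
    rw [List.filter_eq_self]
    intro x hx
    have := hpos x (List.mem_of_mem_drop hx)
    simp; omega
  have hbwd : bwd L i c = A ++ B := by
    rw [bwd, List.filter_append, hBfilter]
  have hdecomp : A0 = A ++ List.replicate (i - A.length) 0 := by
    have := sorted_zero_suffix hA0sorted
    rw [hA0len] at this
    exact this
  have hAle : A.length ≤ i := by
    rw [← hA0len, hA]; exact List.length_filter_le _ _
  have hmapback : A0.map (· + c) = L.take i := by
    rw [hA0, List.map_map]
    have : ∀ x ∈ L.take i, ((· + c) ∘ (· - c)) x = id x := by
      intro x hx
      have := mem_take_ge_c h hi1 hc x hx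
      simp
      omega
    rw [List.map_congr_left this, List.map_id]
  by_cases hk : A.length = i
  · -- no zeros were dropped
    have hA0A : A0 = A := by
      rw [hdecomp, hk, Nat.sub_self, List.replicate_zero, List.append_nil]
    have hblen : (bwd L i c).length = L.length := by
      rw [hbwd, List.length_append, ← hA0A, hA0len, hB, List.length_drop]; omega
    have hpadb : pad (bwd L i c) i = bwd L i c := pad_of_le (by omega)
    rw [fwd, hpadb, hbwd, ← hA0A]
    rw [List.take_append, hA0len, Nat.sub_self, List.take_zero,
      List.append_nil, List.take_of_length_le (le_of_eq hA0len)]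
    rw [List.drop_append, hA0len, Nat.sub_self, List.drop_zero,
      List.drop_eq_nil_of_le (le_of_eq hA0len), List.nil_append]
    rw [hmapback, hB, List.take_append_drop]
  · -- L has length exactly i and a suffix equal to c
    have hkk : A.length < i := lt_of_le_of_ne hAle hk
    have hidx : i - 1 < A0.length := by omega
    have hzero : A0[i-1]'hidx = 0 := by
      have heq := List.getElem_of_eq hdecomp hidx
      rw [heq, List.getElem_append_right (by omega)]
      exact List.getElem_replicate _
    have hidx2 : i - 1 < (L.take i).length := by
      rw [List.length_take]; omega
    have hval : A0[i-1]'hidx = L[i-1]'(by omega) - c := by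
      have heq := List.getElem_of_eq hA0 hidx
      rw [heq, List.getElem_map]
      congr 1
      exact List.getElem_take
    have hLc : L[i-1]'(by omega) ≤ c := by omega
    have hgd : L.getD (i-1) 0 = L[i-1]'(by omega) := gD_lt (by omega)
    have hgdi : L.getD i 0 = 0 := by omega
    have hlen : L.length = i := by
      by_contra hne
      have hilt : i < L.length := by omega
      have := hpos (L[i]'hilt) (List.getElem_mem hilt)
      rw [gD_lt hilt] at hgdi
      omega
    have hBnil : B = [] := by
      rw [hB]; exact List.drop_eq_nil_of_le (by omega)
    have hbwdA : bwd L i c = A := by rw [hbwd, hBnil, List.append_nil]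
    have hpadb : pad (bwd L i c) i = A0 := by
      rw [pad, hbwdA, hdecomp]
    rw [fwd, hpadb]
    rw [List.take_of_length_le (le_of_eq hA0len),
      List.drop_eq_nil_of_le (le_of_eq hA0len), List.append_nil]
    rw [hmapback]
    rw [← hlen, List.take_length]

-- We need the original defs for testing; copy minimal ones

lemma partsList_sorted {n : ℕ} (p : n.Partition) : (partsList p).Pairwise (· ≥ ·) :=
  Multiset.pairwise_sort _ _

lemma partsList_pos {n : ℕ} (p : n.Partition) : ∀ x ∈ partsList p, 0 < x := by
  intro x hx
  exact p.parts_pos (by rwa [← Multiset.mem_sort (· ≥ ·)])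

lemma partsList_sum {n : ℕ} (p : n.Partition) : (partsList p).sum = n := by
  have h : ((partsList p : List ℕ) : Multiset ℕ) = p.parts := Multiset.sort_eq _ _
  have := congrArg Multiset.sum h
  rw [Multiset.sum_coe] at this
  rw [this, p.parts_sum]

lemma partsList_length {n : ℕ} (p : n.Partition) : (partsList p).length = numParts p :=
  Multiset.length_sort _

lemma partsList_inj {n : ℕ} {p q : n.Partition} (h : partsList p = partsList q) : p = q := by
  apply Nat.Partition.ext
  have hp : ((partsList p : List ℕ) : Multiset ℕ) = p.parts := Multiset.sort_eq _ _
  have hq : ((partsList q : List ℕ) : Multiset ℕ) = q.parts := Multiset.sort_eq _ _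
  rw [← hp, ← hq, h]

def ofList (n : ℕ) (L : List ℕ) (hpos : ∀ x ∈ L, 0 < x) (hsum : L.sum = n) : n.Partition :=
  ⟨(L : Multiset ℕ), fun hx => hpos _ (by simpa using hx), by simpa using hsum⟩

lemma partsList_ofList (n : ℕ) (L : List ℕ) (hpos : ∀ x ∈ L, 0 < x) (hsum : L.sum = n)
    (hs : L.Pairwise (· ≥ ·)) : partsList (ofList n L hpos hsum) = L := by
  apply (fun hp => List.Perm.eq_of_pairwise' (partsList_sorted _) hs hp)
  rw [← Multiset.coe_eq_coe]
  exact Multiset.sort_eq _ _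

lemma numParts_ofList (n : ℕ) (L : List ℕ) (hpos : ∀ x ∈ L, 0 < x) (hsum : L.sum = n) :
    numParts (ofList n L hpos hsum) = L.length := by
  simp [numParts, ofList]


lemma part_sub {n : ℕ} (p : n.Partition) (j : ℕ) :
    part p j - part p (j+1) = (partsList p).getD (j-1) 0 - (partsList p).getD j 0 := rfl

/-- The set of valid indices `i` for a pair `(p, i)`. -/
noncomputable def ValidI (r t : ℕ) {n : ℕ} (p : n.Partition) : Finset ℕ :=
  (Finset.Icc 1 (numParts p)).filter
    (fun i => t ≤ part p i - part p (i+1) ∧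
      ∀ j ∈ Finset.Icc 1 (numParts p), j ≠ i → part p j - part p (j+1) ≤ r - 1)

lemma mem_ValidI {r t n : ℕ} {p : n.Partition} {i : ℕ} :
    i ∈ ValidI r t p ↔ (1 ≤ i ∧ i ≤ numParts p) ∧ (t ≤ part p i - part p (i+1) ∧
      ∀ j ∈ Finset.Icc 1 (numParts p), j ≠ i → part p j - part p (j+1) ≤ r - 1) := by
  simp [ValidI, Finset.mem_filter, Finset.mem_Icc, and_assoc]

lemma mem_ValidI_list {r t n : ℕ} {p : n.Partition} {i : ℕ} (h : i ∈ ValidI r t p) :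
    1 ≤ i ∧ i ≤ (partsList p).length ∧
    t ≤ (partsList p).getD (i-1) 0 - (partsList p).getD i 0 ∧
    ∀ j, 1 ≤ j → j ≤ (partsList p).length → j ≠ i →
      (partsList p).getD (j-1) 0 - (partsList p).getD j 0 ≤ r - 1 := by
  rw [mem_ValidI] at h
  obtain ⟨⟨h1, h2⟩, h3, h4⟩ := h
  rw [part_sub] at h3
  refine ⟨h1, by rw [partsList_length]; exact h2, h3, ?_⟩
  intro j hj1 hj2 hji
  have := h4 j (Finset.mem_Icc.mpr ⟨hj1, by rwa [← partsList_length]⟩) hji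
  rwa [part_sub] at this

/-- difference of a `fwd` list -/
lemma fwd_diff (L : List ℕ) (hs : L.Pairwise (· ≥ ·)) (i c j : ℕ) (hj1 : 1 ≤ j) :
    (fwd L i c).getD (j-1) 0 - (fwd L i c).getD j 0
      = (L.getD (j-1) 0 - L.getD j 0) + if j = i then c else 0 := by
  have e1 := fwd_getD L i c (j-1)
  have e2 := fwd_getD L i c j
  have hmono : L.getD j 0 ≤ L.getD (j-1) 0 := getD_anti hs (by omega)
  rcases lt_trichotomy j i with h | h | h
  · rw [if_neg (by omega)]
    rw [if_pos (by omega)] at e1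
    rw [if_pos (by omega)] at e2
    omega
  · rw [if_pos h]
    rw [if_pos (by omega)] at e1
    rw [if_neg (by omega)] at e2
    omega
  · rw [if_neg (by omega)]
    rw [if_neg (by omega)] at e1
    rw [if_neg (by omega)] at e2
    omega

lemma bwd_flat {L : List ℕ} (hs : L.Pairwise (· ≥ ·)) (hpos : ∀ x ∈ L, 0 < x)
    {r i c : ℕ} (hi1 : 1 ≤ i) (hi2 : i ≤ L.length)
    (hc : L.getD i 0 + c ≤ L.getD (i-1) 0)
    (hc2 : L.getD (i-1) 0 - L.getD i 0 - c ≤ r - 1)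
    (hall : ∀ j, 1 ≤ j → j ≤ L.length → j ≠ i →
      L.getD (j-1) 0 - L.getD j 0 ≤ r - 1) :
    ∀ j, 1 ≤ j → j ≤ (bwd L i c).length →
      (bwd L i c).getD (j-1) 0 - (bwd L i c).getD j 0 ≤ r - 1 := by
  intro j hj1 hj2
  have hM := bwd_sorted hs hi1 hc
  have hfb := fwd_bwd hs hpos hi1 hi2 hc
  have hdiff := fwd_diff (bwd L i c) hM i c j hj1
  rw [hfb] at hdiff
  have hle := bwd_length_le hi2 c
  by_cases hji : j = i
  · subst hji; rw [if_pos rfl] at hdiff; omega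
  · rw [if_neg hji, Nat.add_zero] at hdiff
    have := hall j hj1 (by omega) hji
    omega

lemma bwd_sum {L : List ℕ} (hs : L.Pairwise (· ≥ ·)) (hpos : ∀ x ∈ L, 0 < x)
    {i c : ℕ} (hi1 : 1 ≤ i) (hi2 : i ≤ L.length)
    (hc : L.getD i 0 + c ≤ L.getD (i-1) 0) :
    (bwd L i c).sum + i * c = L.sum := by
  have h := fwd_sum (bwd L i c) i c
  rw [fwd_bwd hs hpos hi1 hi2 hc] at h
  omega

lemma c_bounds {r t d : ℕ} (hr : 0 < r) (ht : t ≤ d) :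
    (d - t) / r * r + t ≤ d ∧ d - ((d - t) / r * r + t) ≤ r - 1 := by
  have h1 := Nat.div_add_mod (d - t) r
  have h2 : (d - t) % r < r := Nat.mod_lt _ hr
  rw [Nat.mul_comm] at h1
  set u := (d - t) / r * r with hu
  omega

lemma a_rec {r t a x : ℕ} (hr : 0 < r) (hx : x < r) : (x + (a * r + t) - t) / r = a := by
  have h : x + (a * r + t) - t = x + a * r := by omega
  rw [h, Nat.add_mul_div_right _ _ hr, Nat.div_eq_of_lt hx, Nat.zero_add]

/-- the `a` recovered from a pair `(p, i)` -/
def theA (r t : ℕ) {n : ℕ} (p : n.Partition) (i : ℕ) : ℕ :=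
  ((partsList p).getD (i-1) 0 - (partsList p).getD i 0 - t) / r

/-- data part of the map from pairs to triples -/
def toTdata (r t : ℕ) {n : ℕ} (p : n.Partition) (i : ℕ) : Σ m : ℕ, m.Partition × ℕ × ℕ :=
  ⟨(bwd (partsList p) i (theA r t p i * r + t)).sum,
   ofList _ (bwd (partsList p) i (theA r t p i * r + t)) (bwd_pos _ _ _) rfl,
   theA r t p i, i⟩

/-- the partition obtained by adding `a*r + t` to the first `i` parts of `μ` -/
def toP (n : ℕ) {m : ℕ} (μ : m.Partition) (a i r t : ℕ) (ht1 : 1 ≤ t)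
    (hsum : m + i * (a * r + t) = n) : n.Partition :=
  ofList n (fwd (partsList μ) i (a * r + t))
    (fwd_pos (partsList_pos μ) (Nat.lt_of_lt_of_le ht1 (Nat.le_add_left t _)) i)
    (by rw [fwd_sum, partsList_sum]; exact hsum)

lemma partsList_toP (n : ℕ) {m : ℕ} (μ : m.Partition) (a i r t : ℕ) (ht1 : 1 ≤ t)
    (hsum : m + i * (a * r + t) = n) :
    partsList (toP n μ a i r t ht1 hsum) = fwd (partsList μ) i (a * r + t) :=
  partsList_ofList _ _ _ _ (fwd_sorted (partsList_sorted μ) _ _)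

lemma mem_ValidI_toP (n : ℕ) {m : ℕ} (μ : m.Partition) (a i r t : ℕ)
    (hr : 2 ≤ r) (ht1 : 1 ≤ t) (hi1 : 1 ≤ i) (hfl : IsFlat r μ)
    (hsum : m + i * (a * r + t) = n) :
    i ∈ ValidI r t (toP n μ a i r t ht1 hsum) := by
  set c := a * r + t with hcdef
  have hLs := partsList_sorted μ
  have hpl := partsList_toP n μ a i r t ht1 hsum
  have hnum : numParts (toP n μ a i r t ht1 hsum) = max (numParts μ) i := by
    rw [← partsList_length, hpl, fwd_length, partsList_length]
  rw [mem_ValidI]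
  refine ⟨⟨hi1, by rw [hnum]; exact le_max_right _ _⟩, ?_, ?_⟩
  · rw [part_sub, hpl, fwd_diff _ hLs _ _ _ hi1, if_pos rfl]
    omega
  · intro j hj hji
    rw [Finset.mem_Icc, hnum] at hj
    rw [part_sub, hpl, fwd_diff _ hLs _ _ _ hj.1, if_neg hji, Nat.add_zero]
    rcases le_or_gt j (numParts μ) with h | h
    · have := hfl j hj.1 h
      rwa [part_sub] at this
    · have hz : (partsList μ).getD (j-1) 0 = 0 := gD_ge (by rw [partsList_length]; omega)
      omega

lemma Tdata_ext {x y : Σ m : ℕ, m.Partition × ℕ × ℕ}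
    (hL : partsList x.2.1 = partsList y.2.1) (ha : x.2.2.1 = y.2.2.1)
    (hi : x.2.2.2 = y.2.2.2) : x = y := by
  obtain ⟨m, μ, a, i⟩ := x
  obtain ⟨m', μ', a', i'⟩ := y
  dsimp at hL ha hi
  have hm : m = m' := by rw [← partsList_sum μ, ← partsList_sum μ', hL]
  subst hm; subst ha; subst hi
  rw [partsList_inj hL]

lemma Sig_ext {n r t : ℕ} {x y : Σ p : n.Partition, {i // i ∈ ValidI r t p}}
    (hp : x.1 = y.1) (hi : (x.2 : ℕ) = (y.2 : ℕ)) : x = y := by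
  obtain ⟨p, i, h⟩ := x
  obtain ⟨q, j, h'⟩ := y
  dsimp at hp hi
  subst hp; subst hi
  rfl

lemma main_card (n r t : ℕ) (hr : 2 ≤ r) (ht1 : 1 ≤ t) :
    Nat.card (Σ p : n.Partition, {i // i ∈ ValidI r t p}) =
    Nat.card {x : Σ m : ℕ, m.Partition × ℕ × ℕ //
      IsFlat r x.2.1 ∧ 1 ≤ x.2.2.2 ∧ x.1 + x.2.2.2 * (x.2.2.1 * r + t) = n} := by
  apply Nat.card_congr
  have hrpos : 0 < r := by omega
  refine ⟨fun x => ⟨toTdata r t x.1 x.2.1, ?_, ?_, ?_⟩,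
          fun y => ⟨toP n y.1.2.1 y.1.2.2.1 y.1.2.2.2 r t ht1 y.2.2.2,
                    ⟨y.1.2.2.2, mem_ValidI_toP n y.1.2.1 y.1.2.2.1 y.1.2.2.2 r t hr ht1
                       y.2.2.1 y.2.1 y.2.2.2⟩⟩, ?_, ?_⟩
  · -- IsFlat of the bwd partition
    obtain ⟨p, i, hmem⟩ := x
    obtain ⟨hi1, hi2, hd, hall⟩ := mem_ValidI_list hmem
    have hcb := c_bounds (r := r) (t := t)
      (d := (partsList p).getD (i-1) 0 - (partsList p).getD i 0) hrpos hd
    have hmono : (partsList p).getD i 0 ≤ (partsList p).getD (i-1) 0 :=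
      getD_anti (partsList_sorted p) (by omega)
    have hc : (partsList p).getD i 0 + (theA r t p i * r + t) ≤ (partsList p).getD (i-1) 0 := by
      have h1 : theA r t p i * r + t ≤ (partsList p).getD (i-1) 0 - (partsList p).getD i 0 :=
        hcb.1
      omega
    have hc2 : (partsList p).getD (i-1) 0 - (partsList p).getD i 0 - (theA r t p i * r + t)
        ≤ r - 1 := hcb.2
    have hplm := partsList_ofList ((bwd (partsList p) i (theA r t p i * r + t)).sum)
      (bwd (partsList p) i (theA r t p i * r + t)) (bwd_pos _ _ _) rfl
      (bwd_sorted (partsList_sorted p) hi1 hc)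
    have hnum := numParts_ofList ((bwd (partsList p) i (theA r t p i * r + t)).sum)
      (bwd (partsList p) i (theA r t p i * r + t)) (bwd_pos _ _ _) rfl
    show IsFlat r (toTdata r t p i).2.1
    simp only [toTdata]
    intro j hj1 hj2
    rw [hnum] at hj2
    rw [part_sub, hplm]
    exact bwd_flat (partsList_sorted p) (partsList_pos p) hi1 hi2 hc hc2 hall j hj1 hj2
  · -- 1 ≤ i
    have := (mem_ValidI_list x.2.2).1
    simp only [toTdata]
    exact this
  · -- sum condition
    obtain ⟨p, i, hmem⟩ := x
    obtain ⟨hi1, hi2, hd, hall⟩ := mem_ValidI_list hmem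
    have hcb := c_bounds (r := r) (t := t)
      (d := (partsList p).getD (i-1) 0 - (partsList p).getD i 0) hrpos hd
    have hmono : (partsList p).getD i 0 ≤ (partsList p).getD (i-1) 0 :=
      getD_anti (partsList_sorted p) (by omega)
    have hc : (partsList p).getD i 0 + (theA r t p i * r + t) ≤ (partsList p).getD (i-1) 0 := by
      have h1 : theA r t p i * r + t ≤ (partsList p).getD (i-1) 0 - (partsList p).getD i 0 :=
        hcb.1
      omega
    have hsum := bwd_sum (partsList_sorted p) (partsList_pos p) hi1 hi2 hc
    rw [partsList_sum] at hsum
    show (toTdata r t p i).1 + (toTdata r t p i).2.2.2 * ((toTdata r t p i).2.2.1 * r + t) = n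
    simp only [toTdata]
    exact hsum
  · -- left inverse
    rintro ⟨p, i, hmem⟩
    obtain ⟨hi1, hi2, hd, hall⟩ := mem_ValidI_list hmem
    have hcb := c_bounds (r := r) (t := t)
      (d := (partsList p).getD (i-1) 0 - (partsList p).getD i 0) hrpos hd
    have hmono : (partsList p).getD i 0 ≤ (partsList p).getD (i-1) 0 :=
      getD_anti (partsList_sorted p) (by omega)
    have hc : (partsList p).getD i 0 + (theA r t p i * r + t) ≤ (partsList p).getD (i-1) 0 := by
      have h1 : theA r t p i * r + t ≤ (partsList p).getD (i-1) 0 - (partsList p).getD i 0 :=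
        hcb.1
      omega
    apply Sig_ext
    · -- partition components agree
      apply partsList_inj
      rw [partsList_toP]
      have hplm := partsList_ofList ((bwd (partsList p) i (theA r t p i * r + t)).sum)
        (bwd (partsList p) i (theA r t p i * r + t)) (bwd_pos _ _ _) rfl
        (bwd_sorted (partsList_sorted p) hi1 hc)
      simp only [toTdata]
      rw [hplm]
      exact fwd_bwd (partsList_sorted p) (partsList_pos p) hi1 hi2 hc
    · simp only [toTdata]
  · -- right inverse
    rintro ⟨⟨m, μ, a, i⟩, hfl, hi1, hsum⟩
    dsimp only at hfl hi1 hsum ⊢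
    apply Subtype.ext
    set P := toP n μ a i r t ht1 hsum with hPdef
    have hLP : partsList P = fwd (partsList μ) i (a * r + t) := partsList_toP n μ a i r t ht1 hsum
    have hx : (partsList μ).getD (i-1) 0 - (partsList μ).getD i 0 < r := by
      rcases le_or_gt i (numParts μ) with h | h
      · have := hfl i hi1 h
        rw [part_sub] at this
        omega
      · have hz : (partsList μ).getD (i-1) 0 = 0 := gD_ge (by rw [partsList_length]; omega)
        omega
    have hdiff : (partsList P).getD (i-1) 0 - (partsList P).getD i 0
        = ((partsList μ).getD (i-1) 0 - (partsList μ).getD i 0) + (a * r + t) := by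
      rw [hLP]
      have := fwd_diff (partsList μ) (partsList_sorted μ) i (a * r + t) i hi1
      rw [if_pos rfl] at this
      exact this
    have ha : theA r t P i = a := by
      show ((partsList P).getD (i-1) 0 - (partsList P).getD i 0 - t) / r = a
      rw [hdiff]
      have h : (partsList μ).getD (i-1) 0 - (partsList μ).getD i 0 + (a * r + t) - t
          = (partsList μ).getD (i-1) 0 - (partsList μ).getD i 0 + (a * r + t) - t := rfl
      exact a_rec hrpos hx
    have hmonoP : (partsList P).getD i 0 ≤ (partsList P).getD (i-1) 0 :=
      getD_anti (partsList_sorted P) (by omega)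
    have hcP : (partsList P).getD i 0 + (theA r t P i * r + t) ≤ (partsList P).getD (i-1) 0 := by
      rw [ha]
      omega
    have hbf : bwd (partsList P) i (a * r + t) = partsList μ := by
      rw [hLP]
      exact bwd_fwd (partsList_pos μ) i (a * r + t)
    apply Tdata_ext
    · -- partsList of partition components agree
      show partsList (toTdata r t P i).2.1 = partsList μ
      have hplm := partsList_ofList ((bwd (partsList P) i (theA r t P i * r + t)).sum)
        (bwd (partsList P) i (theA r t P i * r + t)) (bwd_pos _ _ _) rfl
        (bwd_sorted (partsList_sorted P) hi1 hcP)
      simp only [toTdata]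
      rw [hplm, ha, hbf]
    · show (toTdata r t P i).2.2.1 = a
      simp only [toTdata]
      exact ha
    · simp only [toTdata]

lemma card_sigma_eq (n r t : ℕ) :
    Nat.card (Σ p : n.Partition, {i // i ∈ ValidI r t p})
      = ∑ p : n.Partition, (ValidI r t p).card := by
  rw [Nat.card_eq_fintype_card, Fintype.card_sigma]
  exact Finset.sum_congr rfl (fun p _ => Fintype.card_coe _)

lemma claim_a {n r t : ℕ} {p : n.Partition} (hfl : IsFlat r p) :
    ValidI r t p = (Finset.Icc 1 (numParts p)).filter (fun i => t ≤ part p i - part p (i+1)) := by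
  ext i
  rw [mem_ValidI, Finset.mem_filter]
  constructor
  · rintro ⟨h0, h1, _⟩
    exact ⟨Finset.mem_Icc.mpr h0, h1⟩
  · rintro ⟨h0, h1⟩
    rw [Finset.mem_Icc] at h0
    refine ⟨h0, h1, ?_⟩
    intro j hj _
    rw [Finset.mem_Icc] at hj
    exact hfl j hj.1 hj.2

lemma claim_b {n r : ℕ} (hr : 2 ≤ r) {p : n.Partition} (h : IsOneFlat r p) :
    ¬ IsFlat r p := by
  obtain ⟨i, ⟨hi1, hi2, hge⟩, _⟩ := h
  intro hfl
  have := hfl i hi1 hi2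
  omega

lemma claim_c {n r t : ℕ} (hr : 2 ≤ r) (ht2 : t ≤ r - 1) {p : n.Partition}
    (h : IsOneFlat r p) : (ValidI r t p).card = 1 := by
  obtain ⟨i0, ⟨hi1, hi2, hge⟩, hall⟩ := h
  have : ValidI r t p = {i0} := by
    ext i
    rw [mem_ValidI, Finset.mem_singleton]
    constructor
    · rintro ⟨⟨h1, h2⟩, h3, h4⟩
      by_contra hne
      have := h4 i0 (Finset.mem_Icc.mpr ⟨hi1, hi2⟩) (fun hh => hne hh.symm)
      omega
    · rintro rfl
      refine ⟨⟨hi1, hi2⟩, by omega, ?_⟩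
      intro j hj hji
      rw [Finset.mem_Icc] at hj
      exact hall j hj.1 hj.2 hji
  rw [this, Finset.card_singleton]

lemma claim_d {n r t : ℕ} (hr : 2 ≤ r) {p : n.Partition}
    (h1 : ¬ IsFlat r p) (h2 : ¬ IsOneFlat r p) : ValidI r t p = ∅ := by
  rw [Finset.eq_empty_iff_forall_notMem]
  intro i hi
  rw [mem_ValidI] at hi
  obtain ⟨⟨hi1, hi2⟩, hd, hall⟩ := hi
  by_cases hcase : part p i - part p (i+1) ≤ r - 1
  · apply h1
    intro j hj1 hj2
    by_cases hji : j = i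
    · subst hji; exact hcase
    · exact hall j (Finset.mem_Icc.mpr ⟨hj1, hj2⟩) hji
  · apply h2
    refine ⟨i, ⟨hi1, hi2, by omega⟩, ?_⟩
    intro j hj1 hj2 hji
    exact hall j (Finset.mem_Icc.mpr ⟨hj1, hj2⟩) hji


theorem diff_flat_add_oneFlat_eq_triples (n r t : ℕ) (hr : 2 ≤ r) (ht1 : 1 ≤ t)
    (ht2 : t ≤ r - 1) :
    ((∑ p ∈ Finset.univ.filter (fun p : n.Partition => IsFlat r p), dCount t p) + (Finset.univ.filter (fun p : n.Partition => IsOneFlat r p)).card) =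
      Nat.card {x : Σ m : ℕ, m.Partition × ℕ × ℕ //
        IsFlat r x.2.1 ∧ 1 ≤ x.2.2.2 ∧ x.1 + x.2.2.2 * (x.2.2.1 * r + t) = n} := by
  rw [← main_card n r t hr ht1, card_sigma_eq]
  have hflat : ∑ p ∈ Finset.univ.filter (fun p : n.Partition => IsFlat r p), dCount t p
      = ∑ p ∈ Finset.univ.filter (fun p : n.Partition => IsFlat r p), (ValidI r t p).card := by
    apply Finset.sum_congr rfl
    intro p hp
    rw [claim_a (Finset.mem_filter.mp hp).2]
    rfl
  have hone : (Finset.univ.filter (fun p : n.Partition => IsOneFlat r p)).card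
      = ∑ p ∈ Finset.univ.filter (fun p : n.Partition => ¬ IsFlat r p), (ValidI r t p).card := by
    have hsplit2 := Finset.sum_filter_add_sum_filter_not
      (Finset.univ.filter (fun p : n.Partition => ¬ IsFlat r p))
      (fun p => IsOneFlat r p) (fun p => (ValidI r t p).card)
    have hzero : ∑ p ∈ (Finset.univ.filter (fun p : n.Partition => ¬ IsFlat r p)).filter
        (fun p => ¬ IsOneFlat r p), (ValidI r t p).card = 0 := by
      apply Finset.sum_eq_zero
      intro p hp
      rw [Finset.mem_filter] at hp
      have hp2 := hp.2
      have hp1 := (Finset.mem_filter.mp hp.1).2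
      rw [claim_d hr hp1 hp2, Finset.card_empty]
    have hset : (Finset.univ.filter (fun p : n.Partition => ¬ IsFlat r p)).filter
        (fun p => IsOneFlat r p) = Finset.univ.filter (fun p : n.Partition => IsOneFlat r p) := by
      ext p
      simp only [Finset.mem_filter, Finset.mem_univ, true_and]
      constructor
      · rintro ⟨_, h⟩; exact h
      · intro h; exact ⟨claim_b hr h, h⟩
    have hcnt : ∑ p ∈ Finset.univ.filter (fun p : n.Partition => IsOneFlat r p),
        (ValidI r t p).card
        = (Finset.univ.filter (fun p : n.Partition => IsOneFlat r p)).card := by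
      rw [Finset.card_eq_sum_ones]
      apply Finset.sum_congr rfl
      intro p hp
      exact claim_c hr ht2 (Finset.mem_filter.mp hp).2
    rw [← hsplit2, hset, hzero, hcnt, Nat.add_zero]
  rw [hflat, hone]
  exact Finset.sum_filter_add_sum_filter_not Finset.univ
    (fun p : n.Partition => IsFlat r p) (fun p => (ValidI r t p).card)


end BeckPaper
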